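/- Let s : Fin p → Fin p → ℝ be an arbitrary similarity matrix and λ ∈ ℝ, and define the shifted similarity s_λ by s_λ(i,j) = s(i,j) + λ if i = j and s_λ(i,j) = s(i,j) otherwise. For disjoint nonempty finite subsets C, C' of Fin p, define the Ward linkage associated with a similarity s by δ_s(C,C') = S_s(C)/|C| + S_s(C')/|C'| − S_s(C ∪ C')/(|C|+|C'|), where S_s(C) = ∑_{(i,j)∈C×C} s(i,j). Then δ_{s_λ}(C,C') = δ_s(C,C') + λ. -/

import Mathlib

open Finset

/-- The similarity sum `S_s(C) = ∑_{(i,j)∈C×C} s(i,j)`. -/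
def simSum {p : ℕ} (s : Fin p → Fin p → ℝ) (C : Finset (Fin p)) : ℝ :=
  ∑ i ∈ C, ∑ j ∈ C, s i j

/-- The Ward linkage associated with the similarity `s`:
`δ_s(C,C') = S_s(C)/|C| + S_s(C')/|C'| − S_s(C ∪ C')/(|C|+|C'|)`. -/
noncomputable def wardS {p : ℕ} (s : Fin p → Fin p → ℝ) (C C' : Finset (Fin p)) : ℝ :=
  simSum s C / C.card + simSum s C' / C'.card
    - simSum s (C ∪ C') / (C.card + C'.card)

/-- The shifted similarity `s_λ`, with `s_λ(i,i) = s(i,i) + λ` and `s_λ(i,j) = s(i,j)` for `i ≠ j`. -/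
def shiftSim {p : ℕ} (s : Fin p → Fin p → ℝ) (lam : ℝ) : Fin p → Fin p → ℝ :=
  fun i j => if i = j then s i j + lam else s i j

lemma simSum_shiftSim {p : ℕ} (s : Fin p → Fin p → ℝ) (lam : ℝ) (C : Finset (Fin p)) :
    simSum (shiftSim s lam) C = simSum s C + C.card * lam := by
  unfold simSum shiftSim
  have h : ∀ i ∈ C, (∑ j ∈ C, if i = j then s i j + lam else s i j)
      = (∑ j ∈ C, s i j) + lam := by
    intro i hi
    have : (∑ j ∈ C, if i = j then s i j + lam else s i j)
        = ∑ j ∈ C, (s i j + if i = j then lam else 0) := by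
      apply Finset.sum_congr rfl
      intro j _
      by_cases hij : i = j <;> simp [hij]
    rw [this, Finset.sum_add_distrib, Finset.sum_ite_eq C i (fun _ => lam)]
    simp [hi]
  rw [Finset.sum_congr rfl h, Finset.sum_add_distrib]
  simp [mul_comm]

/-- Shifting the diagonal of the similarity by `λ` shifts Ward's linkage by `λ`:
`δ_{s_λ}(C,C') = δ_s(C,C') + λ`. -/
theorem wardS_shiftSim {p : ℕ} (s : Fin p → Fin p → ℝ) (lam : ℝ)
    (C C' : Finset (Fin p)) (hC : C.Nonempty) (hC' : C'.Nonempty)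
    (hdisj : Disjoint C C') :
    wardS (shiftSim s lam) C C' = wardS s C C' + lam := by
  have hn : (C.card : ℝ) ≠ 0 := by
    exact_mod_cast (Finset.card_pos.mpr hC).ne'
  have hn' : (C'.card : ℝ) ≠ 0 := by
    exact_mod_cast (Finset.card_pos.mpr hC').ne'
  have hsum : (C.card : ℝ) + C'.card ≠ 0 := by positivity
  have hcard : ((C ∪ C').card : ℝ) = C.card + C'.card := by
    exact_mod_cast Finset.card_union_of_disjoint hdisj
  unfold wardS
  rw [simSum_shiftSim, simSum_shiftSim, simSum_shiftSim, hcard]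
  field_simp
  ring
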